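/- Let P⁺ and P⁻ be monic real polynomials of degrees n-m and m, with all roots ξ₁,...,ξ_{n-m} of P⁺ and η₁,...,η_m of P⁻. Then the power sums satisfy ξ₁ᵏ + ... + ξ_{n-m}ᵏ - (η₁ᵏ + ... + η_mᵏ) = θ for all 1 ≤ k ≤ n if and only if the reciprocal polynomials satisfy P⁺*(x)/P⁻*(x) = (1-x)^θ + O(x^{n+1}) as x → 0. -/

import Mathlib

open Polynomial Asymptotics Filter

lemma reflect_prod_linear {ι : Type*} (s : Finset ι) (a : ι → ℝ) :
    Polynomial.reflect s.card (∏ i ∈ s, (X - C (a i))) = ∏ i ∈ s, (1 - C (a i) * X) := by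
  induction s using Finset.cons_induction with
  | empty => simp
  | cons i s hi ih =>
    rw [Finset.prod_cons, Finset.prod_cons, Finset.card_cons,
      show s.card + 1 = 1 + s.card from Nat.add_comm _ _,
      Polynomial.reflect_mul (X - C (a i)) _ (by simp) (by
        rw [Polynomial.natDegree_prod_of_monic _ _ (fun i _ => monic_X_sub_C _)]
        simp), ih]
    congr 1
    have hX : (X : ℝ[X]) = X ^ 1 := (pow_one X).symm
    rw [Polynomial.reflect_sub, Polynomial.reflect_C, hX, Polynomial.reflect_monomial]
    simp

lemma coeff_zero_of_isBigO_pow :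
    ∀ (N : ℕ) (q : ℕ → ℝ),
      ((fun y : ℝ => ∑ k ∈ Finset.range N, q k * y ^ k)
          =O[nhdsWithin (0:ℝ) {(0:ℝ)}ᶜ] fun y => y ^ N) →
      ∀ k < N, q k = 0 := by
  intro N
  induction N with
  | zero => intro q _ k hk; omega
  | succ N ih =>
    intro q hO
    have hval : ∑ k ∈ Finset.range (N+1), q k * (0:ℝ) ^ k = q 0 := by
      rw [Finset.sum_eq_single 0]
      · simp
      · intro b _ hb
        rw [zero_pow hb, mul_zero]
      · simp
    have hq0 : q 0 = 0 := by
      have hc : Continuous (fun y : ℝ => ∑ k ∈ Finset.range (N+1), q k * y ^ k) :=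
        continuous_finset_sum _ fun k _ => continuous_const.mul (continuous_pow k)
      have h1 : Tendsto (fun y : ℝ => ∑ k ∈ Finset.range (N+1), q k * y ^ k)
          (nhdsWithin (0:ℝ) {(0:ℝ)}ᶜ) (nhds (q 0)) := by
        have := (hc.tendsto 0).mono_left (nhdsWithin_le_nhds (s := ({(0:ℝ)}ᶜ : Set ℝ)))
        rwa [hval] at this
      have h2 : Tendsto (fun y : ℝ => ∑ k ∈ Finset.range (N+1), q k * y ^ k)
          (nhdsWithin (0:ℝ) {(0:ℝ)}ᶜ) (nhds 0) := by
        apply hO.trans_tendsto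
        have h3 : Tendsto (fun y : ℝ => y ^ (N+1)) (nhds (0:ℝ)) (nhds ((0:ℝ) ^ (N+1))) :=
          (continuous_pow (N+1)).tendsto (0:ℝ)
        rw [zero_pow (Nat.succ_ne_zero N)] at h3
        exact h3.mono_left nhdsWithin_le_nhds
      exact tendsto_nhds_unique h1 h2
    have hk' : ∀ k < N, q (k+1) = 0 := by
      apply ih (fun k => q (k+1))
      rw [isBigO_iff] at hO ⊢
      obtain ⟨C, hC⟩ := hO
      refine ⟨C, ?_⟩
      filter_upwards [hC, self_mem_nhdsWithin] with y hy hy0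
      simp only [Set.mem_compl_iff, Set.mem_singleton_iff] at hy0
      have hy0' : (0:ℝ) < ‖y‖ := by simpa using abs_pos.mpr hy0
      have heq : ∑ k ∈ Finset.range (N+1), q k * y ^ k
          = y * ∑ k ∈ Finset.range N, q (k+1) * y ^ k := by
        rw [Finset.sum_range_succ' (fun k => q k * y ^ k) N, hq0, zero_mul, add_zero,
          Finset.mul_sum]
        exact Finset.sum_congr rfl fun k _ => by ring
      rw [heq, norm_mul] at hy
      have key : ‖y ^ (N+1)‖ = ‖y‖ * ‖y ^ N‖ := by rw [pow_succ', norm_mul]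
      rw [key, mul_left_comm] at hy
      exact le_of_mul_le_mul_left hy hy0'
    intro k hk; rcases k with _ | k
    · exact hq0
    · exact hk' k (by omega)

lemma norm_pow_isBigO (l : Filter ℝ) (N : ℕ) :
    ((fun y : ℝ => ‖y‖ ^ N) =O[l] fun y : ℝ => y ^ N)
    ∧ ((fun y : ℝ => y ^ N) =O[l] fun y : ℝ => ‖y‖ ^ N) := by
  constructor <;>
  · apply IsBigO.of_bound 1
    filter_upwards with y
    simp [Real.norm_eq_abs, abs_pow, abs_abs]

lemma isBigO_pow_iff_coeff_zero (c : ℕ → ℝ) (h : ℝ → ℝ)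
    (hp : HasFPowerSeriesAt h (FormalMultilinearSeries.ofScalars ℝ c) 0) (N : ℕ) :
    (h =O[nhds 0] fun x : ℝ => x ^ N) ↔ ∀ k < N, c k = 0 := by
  have hps : ∀ y : ℝ, (FormalMultilinearSeries.ofScalars ℝ c).partialSum N y
      = ∑ k ∈ Finset.range N, c k * y ^ k := by
    intro y
    unfold FormalMultilinearSeries.partialSum
    exact Finset.sum_congr rfl fun k _ => by
      rw [FormalMultilinearSeries.ofScalars_apply_eq, smul_eq_mul]
  have hbig := hp.isBigO_sub_partialSum_pow N
  simp only [zero_add] at hbig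
  constructor
  · intro hO
    apply coeff_zero_of_isBigO_pow N
    have h1 : (fun y : ℝ => ∑ k ∈ Finset.range N, c k * y ^ k) =O[nhds 0] fun y => y ^ N := by
      have h2 : (fun y : ℝ => ∑ k ∈ Finset.range N, c k * y ^ k)
          = fun y => h y - (h y - (FormalMultilinearSeries.ofScalars ℝ c).partialSum N y) := by
        funext y; rw [hps y]; ring
      rw [h2]
      exact hO.sub (hbig.trans (norm_pow_isBigO _ N).1)
    exact h1.mono nhdsWithin_le_nhds
  · intro hzero
    have h0 : ∀ y : ℝ, (FormalMultilinearSeries.ofScalars ℝ c).partialSum N y = 0 := by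
      intro y
      rw [hps y]
      exact Finset.sum_eq_zero fun k hk => by
        rw [hzero k (Finset.mem_range.mp hk), zero_mul]
    have : h =O[nhds 0] fun y : ℝ => ‖y‖ ^ N := by
      simpa [h0] using hbig
    exact this.trans (norm_pow_isBigO _ N).1

lemma abs_le_three_mul_abs_exp_sub_one {t : ℝ} (ht : |t| ≤ 1) :
    |t| ≤ 3 * |Real.exp t - 1| := by
  rcases le_or_gt 0 t with h | h
  · have h1 : t + 1 ≤ Real.exp t := Real.add_one_le_exp t
    have h2 : |Real.exp t - 1| = Real.exp t - 1 := abs_of_nonneg (by linarith)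
    rw [abs_of_nonneg h, h2]; linarith
  · have h1 : -t + 1 ≤ Real.exp (-t) := Real.add_one_le_exp (-t)
    have hexp : Real.exp t < 1 := by
      rw [← Real.exp_zero]; exact Real.exp_lt_exp.mpr h
    have h2 : |Real.exp t - 1| = 1 - Real.exp t := by
      rw [abs_of_nonpos (by linarith)]; ring
    have ht1 : -1 ≤ t := by
      rcases abs_le.mp ht with ⟨h', _⟩; exact h'
    have hl : Real.exp (-1) ≤ Real.exp t := Real.exp_le_exp.mpr ht1
    have he3 : (3:ℝ)⁻¹ ≤ Real.exp (-1) := by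
      rw [Real.exp_neg]
      rw [inv_le_inv₀ (by norm_num) (Real.exp_pos 1)]
      exact (Real.exp_one_lt_d9).le.trans (by norm_num)
    have key : (-t) * Real.exp t ≤ 1 - Real.exp t := by
      have := mul_le_mul_of_nonneg_left h1 (Real.exp_pos t).le
      rw [← Real.exp_add] at this
      simp at this
      nlinarith [Real.exp_pos t]
    have : (-t) * (3:ℝ)⁻¹ ≤ 1 - Real.exp t := by
      nlinarith [Real.exp_pos t]
    rw [abs_of_neg h, h2]
    linarith

lemma hasFPowerSeriesAt_logComb {ι κ : Type*} [Fintype ι] [Fintype κ]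
    (ξ : ι → ℝ) (η : κ → ℝ) (θ : ℝ) (c : ℕ → ℝ) (hc0 : c 0 = 0)
    (hc : ∀ k : ℕ, 1 ≤ k → c k = -((∑ i, ξ i ^ k) - (∑ j, η j ^ k) - θ) / k) :
    HasFPowerSeriesAt
      (fun x => (∑ i, Real.log (1 - ξ i * x)) - (∑ j, Real.log (1 - η j * x))
        - θ * Real.log (1 - x))
      (FormalMultilinearSeries.ofScalars ℝ c) 0 := by
  set f : ℝ → ℝ := fun x => (∑ i, Real.log (1 - ξ i * x)) - (∑ j, Real.log (1 - η j * x))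
        - θ * Real.log (1 - x) with hf
  set B : ℝ := 1 + (∑ i, |ξ i|) + (∑ j, |η j|) with hBdef
  have hsξ : (0:ℝ) ≤ ∑ i, |ξ i| := Finset.sum_nonneg fun i _ => abs_nonneg _
  have hsη : (0:ℝ) ≤ ∑ j, |η j| := Finset.sum_nonneg fun j _ => abs_nonneg _
  have hB1 : (1:ℝ) ≤ B := by rw [hBdef]; linarith
  have hB0 : (0:ℝ) < B := by linarith
  have hξB : ∀ i, |ξ i| ≤ B := fun i => by
    have := Finset.single_le_sum (f := fun i => |ξ i|) (fun i _ => abs_nonneg _)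
      (Finset.mem_univ i)
    rw [hBdef]; linarith
  have hηB : ∀ j, |η j| ≤ B := fun j => by
    have := Finset.single_le_sum (f := fun j => |η j|) (fun j _ => abs_nonneg _)
      (Finset.mem_univ j)
    rw [hBdef]; linarith
  set C : ℝ := (Fintype.card ι : ℝ) + (Fintype.card κ : ℝ) + |θ| with hCdef
  refine ⟨ENNReal.ofReal B⁻¹, ?_, ENNReal.ofReal_pos.mpr (by positivity), ?_⟩
  · -- radius bound
    rw [ENNReal.ofReal]
    apply FormalMultilinearSeries.le_radius_of_bound _ C
    intro k
    rw [FormalMultilinearSeries.ofScalars_norm]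
    rw [Real.coe_toNNReal _ (by positivity)]
    rcases Nat.eq_zero_or_pos k with rfl | hk
    · rw [hc0]; simp; positivity
    · have hck : |c k| ≤ C * B ^ k := by
        rw [hc k hk]
        have hk0 : (1:ℝ) ≤ (k:ℝ) := by exact_mod_cast hk
        have hBk1 : (1:ℝ) ≤ B ^ k := one_le_pow₀ hB1
        have hS : |∑ i, ξ i ^ k| ≤ (Fintype.card ι : ℝ) * B ^ k := by
          calc |∑ i, ξ i ^ k| ≤ ∑ i, |ξ i ^ k| := Finset.abs_sum_le_sum_abs _ _
            _ ≤ ∑ _i : ι, B ^ k := Finset.sum_le_sum fun i _ => by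
                rw [abs_pow]; exact pow_le_pow_left₀ (abs_nonneg _) (hξB i) k
            _ = (Fintype.card ι : ℝ) * B ^ k := by
                rw [Finset.sum_const, Finset.card_univ, nsmul_eq_mul]
        have hT : |∑ j, η j ^ k| ≤ (Fintype.card κ : ℝ) * B ^ k := by
          calc |∑ j, η j ^ k| ≤ ∑ j, |η j ^ k| := Finset.abs_sum_le_sum_abs _ _
            _ ≤ ∑ _j : κ, B ^ k := Finset.sum_le_sum fun j _ => by
                rw [abs_pow]; exact pow_le_pow_left₀ (abs_nonneg _) (hηB j) k
            _ = (Fintype.card κ : ℝ) * B ^ k := by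
                rw [Finset.sum_const, Finset.card_univ, nsmul_eq_mul]
        have hθ : |θ| ≤ |θ| * B ^ k := le_mul_of_one_le_right (abs_nonneg _) hBk1
        rw [abs_div, abs_neg]
        have h1 : |(∑ i, ξ i ^ k) - (∑ j, η j ^ k) - θ| ≤ C * B ^ k := by
          rw [hCdef]
          calc |(∑ i, ξ i ^ k) - (∑ j, η j ^ k) - θ|
              ≤ |∑ i, ξ i ^ k| + |∑ j, η j ^ k| + |θ| := by
                apply (abs_sub _ _).trans; gcongr; exact abs_sub _ _
            _ ≤ _ := by nlinarith
        have hk1 : (1:ℝ) ≤ |(k:ℝ)| := by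
          rw [abs_of_nonneg (by positivity)]; exact hk0
        calc |(∑ i, ξ i ^ k) - (∑ j, η j ^ k) - θ| / |(k:ℝ)|
            ≤ |(∑ i, ξ i ^ k) - (∑ j, η j ^ k) - θ| / 1 := by
              gcongr
            _ ≤ C * B ^ k := by rw [div_one]; exact h1
      calc |c k| * B⁻¹ ^ k ≤ (C * B ^ k) * B⁻¹ ^ k := by
            apply mul_le_mul_of_nonneg_right hck (by positivity)
        _ = C := by
            rw [inv_pow, mul_assoc, mul_inv_cancel₀ (by positivity), mul_one]
  · -- HasSum
    intro y hy
    have hyB : |y| < B⁻¹ := by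
      rw [mem_eball_zero_iff, ← ofReal_norm,
        ENNReal.ofReal_lt_ofReal_iff (by positivity), Real.norm_eq_abs] at hy
      exact hy
    have hy1 : |y| < 1 := lt_of_lt_of_le hyB (by
      rw [inv_le_one_iff₀]; right; exact hB1)
    have hmul : ∀ a : ℝ, |a| ≤ B → |a * y| < 1 := by
      intro a ha
      rw [abs_mul]
      calc |a| * |y| ≤ B * |y| := mul_le_mul_of_nonneg_right ha (abs_nonneg _)
        _ < B * B⁻¹ := by
            apply mul_lt_mul_of_pos_left hyB hB0
        _ = 1 := mul_inv_cancel₀ (ne_of_gt hB0)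
    have H1 : HasSum (fun k : ℕ => ∑ i, (ξ i * y) ^ (k+1) / (k+1))
        (∑ i, -Real.log (1 - ξ i * y)) :=
      hasSum_sum fun i _ => Real.hasSum_pow_div_log_of_abs_lt_one (hmul _ (hξB i))
    have H2 : HasSum (fun k : ℕ => ∑ j, (η j * y) ^ (k+1) / (k+1))
        (∑ j, -Real.log (1 - η j * y)) :=
      hasSum_sum fun j _ => Real.hasSum_pow_div_log_of_abs_lt_one (hmul _ (hηB j))
    have H3 : HasSum (fun k : ℕ => θ * (y ^ (k+1) / (k+1))) (θ * -Real.log (1 - y)) :=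
      (Real.hasSum_pow_div_log_of_abs_lt_one (by simpa using hy1)).mul_left θ
    have Htot : HasSum
        (fun k : ℕ => -(∑ i, (ξ i * y) ^ (k+1) / (k+1)) + (∑ j, (η j * y) ^ (k+1) / (k+1))
          + θ * (y ^ (k+1) / (k+1))) (f y) := by
      have := (H1.neg.add H2).add H3
      convert this using 1
      · rfl
      rw [hf]
      simp only [Finset.sum_neg_distrib, neg_neg]
      ring
    have hterm : ∀ k : ℕ,
        -(∑ i, (ξ i * y) ^ (k+1) / (k+1)) + (∑ j, (η j * y) ^ (k+1) / (k+1))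
          + θ * (y ^ (k+1) / (k+1)) = c (k+1) * y ^ (k+1) := by
      intro k
      rw [hc (k+1) (by omega)]
      have hk0 : ((k:ℝ)+1) ≠ 0 := by positivity
      push_cast
      simp only [mul_pow]
      rw [← Finset.sum_div, ← Finset.sum_div, ← Finset.sum_mul, ← Finset.sum_mul]
      field_simp
      ring
    rw [funext hterm] at Htot
    have Hshift : HasSum (fun k : ℕ => c k * y ^ k) (f y) := by
      have := (hasSum_nat_add_iff (f := fun k : ℕ => c k * y ^ k) 1).mp (by simpa using Htot)
      simpa [hc0] using this
    rw [zero_add]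
    convert Hshift using 1
    · rfl
    funext k
    rw [FormalMultilinearSeries.ofScalars_apply_eq, smul_eq_mul]

theorem stmt_14 (n m : ℕ) (hmn : m ≤ n) (θ : ℝ)
    (ξ : Fin (n - m) → ℝ) (η : Fin m → ℝ) (Pp Pm : Polynomial ℝ)
    (hPp : Pp = ∏ i, (X - C (ξ i))) (hPm : Pm = ∏ j, (X - C (η j))) :
    (∀ k : ℕ, 1 ≤ k → k ≤ n → (∑ i, ξ i ^ k) - (∑ j, η j ^ k) = θ) ↔
      (fun x : ℝ =>
          (Pp.reflect (n - m)).eval x / (Pm.reflect m).eval x - (1 - x) ^ θ)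
        =O[nhds 0] fun x : ℝ => x ^ (n + 1) := by
  -- the reflected polynomials evaluate as products of (1 - root * x)
  have hfp : ∀ x : ℝ, (Pp.reflect (n - m)).eval x = ∏ i, (1 - ξ i * x) := by
    intro x
    rw [hPp]
    have hr := reflect_prod_linear (Finset.univ : Finset (Fin (n - m))) ξ
    rw [Finset.card_univ, Fintype.card_fin] at hr
    rw [hr, eval_prod]
    exact Finset.prod_congr rfl fun i _ => by simp
  have hgp : ∀ x : ℝ, (Pm.reflect m).eval x = ∏ j, (1 - η j * x) := by
    intro x
    rw [hPm]
    have hr := reflect_prod_linear (Finset.univ : Finset (Fin m)) η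
    rw [Finset.card_univ, Fintype.card_fin] at hr
    rw [hr, eval_prod]
    exact Finset.prod_congr rfl fun j _ => by simp
  -- the coefficient sequence
  set c : ℕ → ℝ := fun k =>
    if k = 0 then 0 else -((∑ i, ξ i ^ k) - (∑ j, η j ^ k) - θ) / k with hcdef
  have hc0 : c 0 = 0 := by simp [hcdef]
  have hck : ∀ k : ℕ, 1 ≤ k → c k = -((∑ i, ξ i ^ k) - (∑ j, η j ^ k) - θ) / k := by
    intro k hk
    simp only [hcdef, if_neg (by omega : ¬ k = 0)]
  -- the log-combination function
  set h : ℝ → ℝ := fun x => (∑ i, Real.log (1 - ξ i * x)) - (∑ j, Real.log (1 - η j * x))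
      - θ * Real.log (1 - x) with hhdef
  have hp : HasFPowerSeriesAt h (FormalMultilinearSeries.ofScalars ℝ c) 0 :=
    hasFPowerSeriesAt_logComb ξ η θ c hc0 hck
  -- first equivalence: power sums ↔ coefficients vanish
  have main₁ : (∀ k : ℕ, 1 ≤ k → k ≤ n → (∑ i, ξ i ^ k) - (∑ j, η j ^ k) = θ)
      ↔ (∀ k < n + 1, c k = 0) := by
    constructor
    · intro H k hk
      rcases Nat.eq_zero_or_pos k with rfl | hk1
      · exact hc0
      · rw [hck k hk1, H k hk1 (by omega), sub_self, neg_zero, zero_div]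
    · intro H k hk1 hkn
      have := H k (by omega)
      rw [hck k hk1, _root_.div_eq_zero_iff, neg_eq_zero] at this
      rcases this with h1 | h1
      · linarith [sub_eq_zero.mp (by linarith [h1] : (∑ i, ξ i ^ k) - (∑ j, η j ^ k) - θ = 0)]
      · exact absurd h1 (by positivity)
  -- second equivalence: coefficients vanish ↔ h is O(x^(n+1))
  have main₂ := isBigO_pow_iff_coeff_zero c h hp (n + 1)
  -- third equivalence : h is O(x^(n+1)) ↔ the rational-function statement
  have main₃ : ((fun x : ℝ =>
          (Pp.reflect (n - m)).eval x / (Pm.reflect m).eval x - (1 - x) ^ θ)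
        =O[nhds 0] fun x : ℝ => x ^ (n + 1)) ↔ (h =O[nhds 0] fun x : ℝ => x ^ (n + 1)) := by
    set B : ℝ := 1 + (∑ i, |ξ i|) + (∑ j, |η j|) with hBdef
    have hsξ : (0:ℝ) ≤ ∑ i, |ξ i| := Finset.sum_nonneg fun i _ => abs_nonneg _
    have hsη : (0:ℝ) ≤ ∑ j, |η j| := Finset.sum_nonneg fun j _ => abs_nonneg _
    have hB1 : (1:ℝ) ≤ B := by rw [hBdef]; linarith
    have hB0 : (0:ℝ) < B := by linarith
    have hξB : ∀ i, |ξ i| ≤ B := fun i => by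
      have := Finset.single_le_sum (f := fun i => |ξ i|) (fun i _ => abs_nonneg _)
        (Finset.mem_univ i)
      rw [hBdef]; linarith
    have hηB : ∀ j, |η j| ≤ B := fun j => by
      have := Finset.single_le_sum (f := fun j => |η j|) (fun j _ => abs_nonneg _)
        (Finset.mem_univ j)
      rw [hBdef]; linarith
    have hsmallnhds : ∀ᶠ x in nhds (0:ℝ), |x| < B⁻¹ := by
      have := Metric.ball_mem_nhds (0:ℝ) (show (0:ℝ) < B⁻¹ by positivity)
      filter_upwards [this] with x hx
      rwa [Metric.mem_ball, Real.dist_eq, sub_zero] at hx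
    -- key eventual identity
    have hident : ∀ᶠ x in nhds (0:ℝ),
        (Pp.reflect (n - m)).eval x / (Pm.reflect m).eval x - (1 - x) ^ θ
          = Real.exp (θ * Real.log (1 - x)) * (Real.exp (h x) - 1) := by
      filter_upwards [hsmallnhds] with x hx
      have hmul : ∀ a : ℝ, |a| ≤ B → 0 < 1 - a * x := by
        intro a ha
        have : |a * x| < 1 := by
          rw [abs_mul]
          calc |a| * |x| ≤ B * |x| := mul_le_mul_of_nonneg_right ha (abs_nonneg _)
            _ < B * B⁻¹ := mul_lt_mul_of_pos_left hx hB0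
            _ = 1 := mul_inv_cancel₀ (ne_of_gt hB0)
        have := (abs_lt.mp this).2
        linarith
      have h1x : 0 < 1 - x := by
        have := hmul 1 (by rw [abs_one]; exact hB1)
        linarith [this]
      have hfexp : (Pp.reflect (n - m)).eval x
          = Real.exp (∑ i, Real.log (1 - ξ i * x)) := by
        rw [hfp x, Real.exp_sum]
        exact Finset.prod_congr rfl fun i _ => (Real.exp_log (hmul _ (hξB i))).symm
      have hgexp : (Pm.reflect m).eval x
          = Real.exp (∑ j, Real.log (1 - η j * x)) := by
        rw [hgp x, Real.exp_sum]
        exact Finset.prod_congr rfl fun j _ => (Real.exp_log (hmul _ (hηB j))).symm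
      rw [hfexp, hgexp, ← Real.exp_sub, Real.rpow_def_of_pos h1x, mul_comm (Real.log (1-x)) θ]
      rw [mul_sub, mul_one, ← Real.exp_add]
      congr 2
      rw [hhdef]
      ring
    -- the bounded factor
    have t1 : Tendsto (fun x : ℝ => 1 - x) (nhds 0) (nhds 1) := by
      have hco : Continuous (fun x : ℝ => 1 - x) := continuous_const.sub continuous_id
      have := hco.tendsto (0:ℝ)
      simpa using this
    have t2 : Tendsto (fun x : ℝ => Real.log (1 - x)) (nhds 0) (nhds 0) := by
      have := (Real.continuousAt_log one_ne_zero).tendsto.comp t1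
      simpa [Function.comp_def, Real.log_one] using this
    have t3 : Tendsto (fun x : ℝ => Real.exp (θ * Real.log (1 - x))) (nhds 0) (nhds 1) := by
      have t2' := t2.const_mul θ
      rw [mul_zero] at t2'
      have := (Real.continuous_exp.tendsto 0).comp t2'
      simpa [Function.comp_def, Real.exp_zero] using this
    have hφ : ∀ᶠ x in nhds (0:ℝ),
        Real.exp (θ * Real.log (1 - x)) ∈ Set.Ioo (1/2 : ℝ) 2 :=
      t3 (Ioo_mem_nhds (by norm_num) (by norm_num))
    -- smallness of h
    have hh0 : h 0 = 0 := by simp [hhdef]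
    have htend : Tendsto h (nhds 0) (nhds 0) := by
      have := hp.continuousAt
      rwa [ContinuousAt, hh0] at this
    have hhsmall : ∀ᶠ x in nhds (0:ℝ), |h x| ≤ 1 := by
      have := htend (Metric.ball_mem_nhds (0:ℝ) one_pos)
      filter_upwards [this] with x hx
      rw [Set.mem_preimage, Metric.mem_ball, Real.dist_eq, sub_zero] at hx
      exact hx.le
    -- E vs h comparison
    have hEh : (fun x : ℝ => Real.exp (h x) - 1) =O[nhds 0] h := by
      apply IsBigO.of_bound 2
      filter_upwards [hhsmall] with x hx
      simpa [Real.norm_eq_abs] using Real.abs_exp_sub_one_le hx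
    have hhE : h =O[nhds 0] (fun x : ℝ => Real.exp (h x) - 1) := by
      apply IsBigO.of_bound 3
      filter_upwards [hhsmall] with x hx
      simpa [Real.norm_eq_abs] using abs_le_three_mul_abs_exp_sub_one hx
    -- D vs E comparison
    have hDE : (fun x : ℝ =>
          (Pp.reflect (n - m)).eval x / (Pm.reflect m).eval x - (1 - x) ^ θ)
        =O[nhds 0] (fun x : ℝ => Real.exp (h x) - 1) := by
      apply IsBigO.of_bound 2
      filter_upwards [hident, hφ] with x hx hφx
      rw [hx, Real.norm_eq_abs, Real.norm_eq_abs, abs_mul,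
        abs_of_pos (lt_trans (by norm_num) hφx.1)]
      exact mul_le_mul_of_nonneg_right hφx.2.le (abs_nonneg _)
    have hED : (fun x : ℝ => Real.exp (h x) - 1) =O[nhds 0] (fun x : ℝ =>
          (Pp.reflect (n - m)).eval x / (Pm.reflect m).eval x - (1 - x) ^ θ) := by
      apply IsBigO.of_bound 2
      filter_upwards [hident, hφ] with x hx hφx
      rw [hx, Real.norm_eq_abs, Real.norm_eq_abs, abs_mul,
        abs_of_pos (lt_trans (by norm_num) hφx.1)]
      nlinarith [abs_nonneg (Real.exp (h x) - 1), hφx.1]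
    constructor
    · intro H
      exact (hhE.trans hED).trans H
    · intro H
      exact (hDE.trans hEh).trans H
  rw [main₃, main₂]
  exact main₁
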